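/- arXiv:math/0502496 — 2 statements merged into one kernel-verified Lean document; each statement's English description precedes it below -/
import Mathlib

section
/- If G is fully residually free and non-abelian, then G contains a free subgroup of rank 2. -/
/-- A group `G` is fully residually free if any finitely many non-trivial elements
can simultaneously be mapped to non-trivial elements of some free group. -/
def FullyResiduallyFree (G : Type*) [Group G] : Prop :=
  ∀ (n : ℕ) (g : Fin n → G), (∀ i, g i ≠ 1) →
    ∃ (α : Type) (f : G →* FreeGroup α), ∀ i, f (g i) ≠ 1

/-- A free group on a subsingleton type is commutative. -/
lemma freeGroup_comm_of_subsingleton {ι : Type*} [Subsingleton ι]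
    (u w : FreeGroup ι) : u * w = w * u := by
  have key : ∀ (i : ι) (w : FreeGroup ι), Commute (FreeGroup.of i) w := by
    intro i w
    induction w using FreeGroup.induction_on with
    | C1 => exact Commute.one_right _
    | of j => rw [Subsingleton.elim i j]
    | inv_of j h => exact h.inv_right
    | mul x y hx hy => exact hx.mul_right hy
  show Commute u w
  induction u using FreeGroup.induction_on with
  | C1 => exact Commute.one_left _
  | of i => exact key i w
  | inv_of i h => exact (key i w).inv_left
  | mul x y hx hy => exact hx.mul_left hy

/-- `FreeGroup.map` of an injective map is injective (via a retraction). -/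
lemma freeGroup_map_injective {α β : Type*} {m : α → β} {r : β → α}
    (hrm : ∀ a, r (m a) = a) : Function.Injective (FreeGroup.map m) := by
  have : Function.LeftInverse (FreeGroup.map r) (FreeGroup.map m) := by
    intro x
    rw [FreeGroup.map.comp]
    have : r ∘ m = id := funext hrm
    rw [this, FreeGroup.map.id]
  exact this.injective

theorem frf_nonabelian_free_subgroup (G : Type*) [Group G]
    (hFRF : FullyResiduallyFree G) (hNA : ¬ ∀ a b : G, a * b = b * a) :
    ∃ f : FreeGroup (Fin 2) →* G, Function.Injective f := by
  classical
  push_neg at hNA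
  obtain ⟨a, b, hab⟩ := hNA
  have hcomm : a * b * a⁻¹ * b⁻¹ ≠ 1 := by
    intro h
    apply hab
    calc a * b = (a * b * a⁻¹ * b⁻¹) * (b * a) := by group
    _ = 1 * (b * a) := by rw [h]
    _ = b * a := one_mul _
  obtain ⟨α, f, hf⟩ := hFRF 1 (fun _ => a * b * a⁻¹ * b⁻¹) (fun _ => hcomm)
  have hfab : f a * f b ≠ f b * f a := by
    intro h
    apply hf 0
    have : f (a * b * a⁻¹ * b⁻¹) = f a * f b * (f a)⁻¹ * (f b)⁻¹ := by
      simp [map_mul, map_inv]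
    rw [this, h]
    group
  -- The range of f is a free group (Nielsen–Schreier)
  set H : Subgroup (FreeGroup α) := f.range with hH
  haveI : IsFreeGroup H := inferInstance
  set ι := IsFreeGroup.Generators H with hι
  set e : FreeGroup ι ≃* H := IsFreeGroup.mulEquiv H with he
  -- H is non-abelian, so ι is nontrivial
  have hx : f a ∈ H := ⟨a, rfl⟩
  have hy : f b ∈ H := ⟨b, rfl⟩
  have hnontriv : Nontrivial ι := by
    by_contra hns
    rw [not_nontrivial_iff_subsingleton] at hns
    apply hfab
    have hc := freeGroup_comm_of_subsingleton (e.symm ⟨f a, hx⟩) (e.symm ⟨f b, hy⟩)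
    have h2 := congrArg e hc
    rw [map_mul, map_mul, e.apply_symm_apply, e.apply_symm_apply] at h2
    simpa using congrArg Subtype.val h2
  obtain ⟨i, j, hij⟩ := hnontriv
  -- the map Fin 2 → ι
  set m : Fin 2 → ι := ![i, j] with hm
  set r : ι → Fin 2 := fun k => if k = i then 0 else 1 with hr
  have hrm : ∀ k, r (m k) = k := by
    intro k
    fin_cases k <;> simp [hm, hr, hij.symm]
  have hmap : Function.Injective (FreeGroup.map m) := freeGroup_map_injective hrm
  -- elements of H corresponding to the two generators
  obtain ⟨a', ha'⟩ := (e (FreeGroup.of i)).2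
  obtain ⟨b', hb'⟩ := (e (FreeGroup.of j)).2
  -- the candidate homomorphism
  set φ : FreeGroup (Fin 2) →* G := FreeGroup.lift ![a', b'] with hφ
  refine ⟨φ, ?_⟩
  have hcompeq : f.comp φ =
      (H.subtype.comp e.toMonoidHom).comp (FreeGroup.map m) := by
    apply FreeGroup.ext_hom
    intro k
    fin_cases k <;>
      simp [hφ, hm, FreeGroup.lift_apply_of, FreeGroup.map.of, ha', hb']
  have hinj : Function.Injective (f.comp φ) := by
    rw [hcompeq]
    exact (H.subtype_injective.comp e.injective).comp hmap
  intro x y hxy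
  exact hinj (by simp [MonoidHom.comp_apply, hxy])
end

section
/- Every fully residually free group is residually free, and a residually free group is fully residually free if and only if it is commutative transitive. -/
noncomputable section

namespace BaumslagAux

open FreeGroup Subgroup

variable {α : Type*}

/-- Exponent sum of the letter `s`. -/
def expHom (s : α) : FreeGroup α →* Multiplicative ℤ :=
  letI := Classical.decEq α
  FreeGroup.lift fun t => Multiplicative.ofAdd (if t = s then (1 : ℤ) else 0)

def E (s : α) (g : FreeGroup α) : ℤ := Multiplicative.toAdd (expHom s g)

lemma E_of_self (s : α) : E s (of s) = 1 := by
  classical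
  simp [E, expHom]

lemma E_of_ne {s t : α} (h : t ≠ s) : E s (of t) = 0 := by
  classical
  simp [E, expHom, h]

lemma E_one (s : α) : E s (1 : FreeGroup α) = 0 := by simp [E]

lemma E_zpow (s : α) (g : FreeGroup α) (k : ℤ) : E s (g ^ k) = k * E s g := by
  simp [E, map_zpow, smul_eq_mul]

lemma subsingleton_zpow [Subsingleton α] (s : α) (g : FreeGroup α) :
    ∃ k : ℤ, g = of s ^ k := by
  induction g using FreeGroup.induction_on with
  | C1 => exact ⟨0, by simp⟩
  | of x => exact ⟨1, by rw [Subsingleton.elim x s, zpow_one]⟩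
  | inv_of x ih =>
    obtain ⟨k, hk⟩ := ih
    exact ⟨-k, by rw [hk, zpow_neg]⟩
  | mul x y hx hy =>
    obtain ⟨k, hk⟩ := hx
    obtain ⟨l, hl⟩ := hy
    exact ⟨k + l, by rw [hk, hl, zpow_add]⟩

lemma eq_one_of_isEmpty [IsEmpty α] (g : FreeGroup α) : g = 1 := by
  induction g using FreeGroup.induction_on with
  | C1 => rfl
  | of x => exact (IsEmpty.false x).elim
  | inv_of x ih => rw [ih]; simp
  | mul x y hx hy => rw [hx, hy, one_mul]

lemma subsingleton_comm [Subsingleton α] (p q : FreeGroup α) : p * q = q * p := by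
  rcases isEmpty_or_nonempty α with hE | hN
  · rw [eq_one_of_isEmpty p, eq_one_of_isEmpty q]
  · obtain ⟨s⟩ := hN
    obtain ⟨k, rfl⟩ := subsingleton_zpow s p
    obtain ⟨l, rfl⟩ := subsingleton_zpow s q
    rw [← zpow_add, ← zpow_add, add_comm]

lemma not_commute_of {s t : α} (h : s ≠ t) :
    of s * of t ≠ of t * of s := by
  classical
  intro hc
  have h2 := congrArg
    (FreeGroup.lift fun a =>
      if a = s then Equiv.swap (0 : Fin 3) 1 else if a = t then Equiv.swap 1 2 else 1) hc
  simp [Ne.symm h] at h2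
  exact absurd h2 (by decide)

lemma closure_pair_comm {G : Type*} [Group G] {x y : G} (h : x * y = y * x) :
    ∀ a ∈ Subgroup.closure ({x, y} : Set G), ∀ b ∈ Subgroup.closure ({x, y} : Set G),
      a * b = b * a := by
  intro a ha b hb
  have hxy : ∀ c ∈ Subgroup.closure ({x, y} : Set G), x * c = c * x ∧ y * c = c * y := by
    intro c hc
    have h1 : Subgroup.closure ({x, y} : Set G) ≤ Subgroup.centralizer {x, y} := by
      rw [Subgroup.closure_le]
      rintro u hu
      rw [SetLike.mem_coe, Subgroup.mem_centralizer_iff]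
      rintro g hg
      simp only [Set.mem_insert_iff, Set.mem_singleton_iff] at hu hg
      rcases hu with rfl | rfl <;> rcases hg with rfl | rfl
      · rfl
      · exact h.symm
      · exact h
      · rfl
    have h2 := Subgroup.mem_centralizer_iff.mp (h1 hc)
    exact ⟨h2 x (by simp), h2 y (by simp)⟩
  obtain ⟨hxa, hya⟩ := hxy a ha
  have h3 : Subgroup.closure ({x, y} : Set G) ≤ Subgroup.centralizer {a} := by
    rw [Subgroup.closure_le]
    rintro u hu
    rw [SetLike.mem_coe, Subgroup.mem_centralizer_iff]
    rintro g hg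
    simp only [Set.mem_singleton_iff] at hg
    subst hg
    simp only [Set.mem_insert_iff, Set.mem_singleton_iff] at hu
    rcases hu with rfl | rfl
    · exact hxa.symm
    · exact hya.symm
  exact Subgroup.mem_centralizer_iff.mp (h3 hb) a (by simp)

lemma subgroup_cyclic (H : Subgroup (FreeGroup α))
    (hc : ∀ a ∈ H, ∀ b ∈ H, a * b = b * a) :
    ∃ z : FreeGroup α, z ∈ H ∧ (∀ h ∈ H, ∃ k : ℤ, h = z ^ k) ∧
      (∀ m : ℤ, z ^ m = 1 → m = 0 ∨ z = 1) := by
  set S := IsFreeGroup.Generators H with hS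
  let φ : H ≃* FreeGroup S := IsFreeGroup.toFreeGroup H
  have hcomm : ∀ p q : FreeGroup S, p * q = q * p := by
    intro p q
    have h1 := hc (φ.symm p) (φ.symm p).2 (φ.symm q) (φ.symm q).2
    have h2 : (φ.symm p) * (φ.symm q) = (φ.symm q) * (φ.symm p) := Subtype.ext (by
      push_cast
      exact h1)
    have h3 := congrArg φ h2
    simpa using h3
  have hsub : Subsingleton S := by
    by_contra hns
    obtain ⟨s, t, hst⟩ := not_subsingleton_iff_nontrivial.mp hns
    exact not_commute_of hst (hcomm _ _)
  rcases isEmpty_or_nonempty S with hE | hN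
  · refine ⟨1, H.one_mem, ?_, fun m _ => Or.inr rfl⟩
    intro h hh
    refine ⟨0, ?_⟩
    have h1 : φ ⟨h, hh⟩ = 1 := eq_one_of_isEmpty _
    have h2 : (⟨h, hh⟩ : H) = 1 := by
      apply φ.injective; rw [h1]; exact (_root_.map_one φ).symm
    have := congrArg (Subtype.val) h2
    simpa using this
  · obtain ⟨s₀⟩ := hN
    refine ⟨((φ.symm (of s₀) : H) : FreeGroup α), (φ.symm (of s₀)).2, ?_, ?_⟩
    · intro h hh
      obtain ⟨k, hk⟩ := subsingleton_zpow s₀ (φ ⟨h, hh⟩)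
      refine ⟨k, ?_⟩
      have h2 : (⟨h, hh⟩ : H) = (φ.symm (of s₀)) ^ k := by
        apply φ.injective
        rw [map_zpow, hk, MulEquiv.apply_symm_apply]
      have := congrArg (Subtype.val) h2
      simpa using this
    · intro m hm
      left
      have h2 : (φ.symm (of s₀)) ^ m = (1 : H) := Subtype.ext (by
        push_cast
        exact hm)
      have h3 := congrArg φ h2
      simp only [map_zpow, _root_.map_one, MulEquiv.apply_symm_apply] at h3
      have h4 := congrArg (E s₀) h3
      rw [E_zpow, E_of_self, E_one, mul_one] at h4
      exact h4

lemma central_eq_one {β : Type*} {b : FreeGroup β} (hb : ∀ p : FreeGroup β, b * p = p * b)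
    {s t : β} (hst : s ≠ t) : b = 1 := by
  obtain ⟨z, hzH, hzpow, hztor⟩ :=
    subgroup_cyclic (Subgroup.closure ({b, of s} : Set (FreeGroup β)))
      (closure_pair_comm (hb (of s)))
  obtain ⟨k, hk⟩ := hzpow b (Subgroup.subset_closure (by simp))
  obtain ⟨l, hl⟩ := hzpow (of s) (Subgroup.subset_closure (by simp))
  obtain ⟨z', hz'H, hz'pow, hz'tor⟩ :=
    subgroup_cyclic (Subgroup.closure ({b, of t} : Set (FreeGroup β)))
      (closure_pair_comm (hb (of t)))
  obtain ⟨k', hk'⟩ := hz'pow b (Subgroup.subset_closure (by simp))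
  obtain ⟨l', hl'⟩ := hz'pow (of t) (Subgroup.subset_closure (by simp))
  have e1 : (1 : ℤ) = l * E s z := by
    rw [← E_of_self s, hl, E_zpow]
  have e2 : (1 : ℤ) = l' * E t z' := by
    rw [← E_of_self t, hl', E_zpow]
  have e3 : (0 : ℤ) = l' * E s z' := by
    rw [← E_of_ne hst.symm (s := s) (t := t), hl', E_zpow]
  have hl'0 : l' ≠ 0 := by
    intro h0; rw [h0, zero_mul] at e2; exact one_ne_zero e2
  have hz's : E s z' = 0 := by
    rcases mul_eq_zero.mp e3.symm with h0 | h0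
    · exact absurd h0 hl'0
    · exact h0
  have hEsb : E s b = 0 := by rw [hk', E_zpow, hz's, mul_zero]
  have hEsz : E s z ≠ 0 := by
    intro h0; rw [h0, mul_zero] at e1; exact one_ne_zero e1
  have hk0 : k = 0 := by
    have : k * E s z = 0 := by rw [← E_zpow, ← hk, hEsb]
    rcases mul_eq_zero.mp this with h0 | h0
    · exact h0
    · exact absurd h0 hEsz
  rw [hk, hk0, zpow_zero]

lemma freeCT {a b c : FreeGroup α} (hb : b ≠ 1) (hab : a * b = b * a) (hbc : b * c = c * b) :
    a * c = c * a := by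
  have haH : a ∈ Subgroup.closure ({a, b, c} : Set (FreeGroup α)) :=
    Subgroup.subset_closure (by simp)
  have hbH : b ∈ Subgroup.closure ({a, b, c} : Set (FreeGroup α)) :=
    Subgroup.subset_closure (by simp)
  have hcH : c ∈ Subgroup.closure ({a, b, c} : Set (FreeGroup α)) :=
    Subgroup.subset_closure (by simp)
  set H := Subgroup.closure ({a, b, c} : Set (FreeGroup α)) with hHdef
  have hbcentral : ∀ h ∈ H, b * h = h * b := by
    have hle : H ≤ Subgroup.centralizer {b} := by
      rw [hHdef, Subgroup.closure_le]
      rintro u hu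
      rw [SetLike.mem_coe, Subgroup.mem_centralizer_iff]
      rintro g hg
      simp only [Set.mem_singleton_iff] at hg
      subst hg
      simp only [Set.mem_insert_iff, Set.mem_singleton_iff] at hu
      rcases hu with rfl | rfl | rfl
      · exact hab.symm
      · rfl
      · exact hbc
    intro h hh
    exact Subgroup.mem_centralizer_iff.mp (hle hh) b (by simp)
  set S := IsFreeGroup.Generators H with hSdef
  let φ : H ≃* FreeGroup S := IsFreeGroup.toFreeGroup H
  set β := φ ⟨b, hbH⟩ with hβdef
  have hβ1 : β ≠ 1 := by
    intro h0
    apply hb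
    have : (⟨b, hbH⟩ : H) = 1 := by
      apply φ.injective
      rw [← hβdef, h0]
      exact (_root_.map_one φ).symm
    simpa using congrArg Subtype.val this
  have hβc : ∀ p : FreeGroup S, β * p = p * β := by
    intro p
    have h2 := hbcentral (φ.symm p) (φ.symm p).2
    have h3 : (⟨b, hbH⟩ : H) * (φ.symm p) = (φ.symm p) * ⟨b, hbH⟩ := Subtype.ext (by
      push_cast
      exact h2)
    have h4 := congrArg φ h3
    simpa [hβdef] using h4
  have hsub : Subsingleton S := by
    by_contra hns
    obtain ⟨s, t, hst⟩ := not_subsingleton_iff_nontrivial.mp hns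
    exact hβ1 (central_eq_one hβc hst)
  have hcomm := subsingleton_comm (φ ⟨a, haH⟩) (φ ⟨c, hcH⟩)
  have h5 : (⟨a, haH⟩ : H) * ⟨c, hcH⟩ = ⟨c, hcH⟩ * ⟨a, haH⟩ := by
    apply φ.injective
    rw [_root_.map_mul, _root_.map_mul]
    exact hcomm
  simpa using congrArg Subtype.val h5

lemma free_tf {x : FreeGroup α} {m : ℤ} (hm : m ≠ 0) (h : x ^ m = 1) : x = 1 := by
  obtain ⟨z, hzH, hzpow, hztor⟩ := subgroup_cyclic (Subgroup.zpowers x) (by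
    intro a ha b hb
    obtain ⟨i, rfl⟩ := Subgroup.mem_zpowers_iff.mp ha
    obtain ⟨j, rfl⟩ := Subgroup.mem_zpowers_iff.mp hb
    rw [← zpow_add, ← zpow_add, add_comm])
  obtain ⟨k, hk⟩ := hzpow x (Subgroup.mem_zpowers x)
  rw [hk, ← zpow_mul] at h
  rcases hztor _ h with h0 | h1
  · rcases mul_eq_zero.mp h0 with h2 | h2
    · rw [hk, h2, zpow_zero]
    · exact absurd h2 hm
  · rw [hk, h1, one_zpow]

lemma free_root {x : FreeGroup α} (hx : x ≠ 1) :
    ∃ z : FreeGroup α, z ≠ 1 ∧ (∀ c : FreeGroup α, c * x = x * c ↔ ∃ k : ℤ, c = z ^ k) ∧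
      (∃ k : ℤ, k ≠ 0 ∧ x = z ^ k) ∧ (∀ m : ℤ, z ^ m = 1 → m = 0) := by
  obtain ⟨z, hzC, hzpow, hztor⟩ := subgroup_cyclic (Subgroup.centralizer {x}) (by
    intro a ha b hb
    have ha' := Subgroup.mem_centralizer_iff.mp ha x (by simp)
    have hb' := Subgroup.mem_centralizer_iff.mp hb x (by simp)
    exact freeCT hx ha'.symm hb')
  have hzx : x * z = z * x := Subgroup.mem_centralizer_iff.mp hzC x (by simp)
  obtain ⟨k, hk⟩ := hzpow x (Subgroup.mem_centralizer_iff.mpr (by rintro g hg; simp only [Set.mem_singleton_iff] at hg; subst hg; rfl))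
  have hk0 : k ≠ 0 := by
    intro h0; rw [h0, zpow_zero] at hk; exact hx hk
  have hz1 : z ≠ 1 := by
    intro h0; rw [h0, one_zpow] at hk; exact hx hk
  refine ⟨z, hz1, ?_, ⟨k, hk0, hk⟩, ?_⟩
  · intro c
    constructor
    · intro hcx
      exact hzpow c (Subgroup.mem_centralizer_iff.mpr (by
        rintro g hg; simp only [Set.mem_singleton_iff] at hg; subst hg; exact hcx.symm))
    · rintro ⟨j, rfl⟩
      rw [hk, ← zpow_add, ← zpow_add, add_comm]
  · intro m hm0
    rcases hztor m hm0 with h0 | h1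
    · exact h0
    · exact absurd h1 hz1

lemma freeCSA {x y : FreeGroup α} (hx : x ≠ 1)
    (h : x * (y * x * y⁻¹) = (y * x * y⁻¹) * x) : x * y = y * x := by
  obtain ⟨z, hz1, hiff, ⟨k, hk0, hxk⟩, htor⟩ := free_root hx
  have hzx : z * x = x * z := (hiff z).mpr ⟨1, (zpow_one z).symm⟩
  have hyxy1 : y * x * y⁻¹ ≠ 1 := by
    intro h0
    apply hx
    have e : x = y⁻¹ * (y * x * y⁻¹) * y := by group
    rw [h0] at e
    simpa using e
  have hconj1 : (y * z * y⁻¹) * (y * x * y⁻¹) = (y * x * y⁻¹) * (y * z * y⁻¹) := by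
    have e1 : (y * z * y⁻¹) * (y * x * y⁻¹) = y * (z * x) * y⁻¹ := by group
    have e2 : (y * x * y⁻¹) * (y * z * y⁻¹) = y * (x * z) * y⁻¹ := by group
    rw [e1, e2, hzx]
  have h1 : (y * z * y⁻¹) * x = x * (y * z * y⁻¹) := freeCT hyxy1 hconj1 h.symm
  obtain ⟨r, hr⟩ := (hiff _).mp h1
  have h' : (y⁻¹ * x * y) * x = x * (y⁻¹ * x * y) := by
    have e1 : (y⁻¹ * x * y) * x = y⁻¹ * (x * (y * x * y⁻¹)) * y := by group
    have e2 : x * (y⁻¹ * x * y) = y⁻¹ * ((y * x * y⁻¹) * x) * y := by group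
    rw [e1, e2, h]
  have hyxy1' : y⁻¹ * x * y ≠ 1 := by
    intro h0
    apply hx
    have e : x = y * (y⁻¹ * x * y) * y⁻¹ := by group
    rw [h0] at e
    simpa using e
  have hconj2 : (y⁻¹ * z * y) * (y⁻¹ * x * y) = (y⁻¹ * x * y) * (y⁻¹ * z * y) := by
    have e1 : (y⁻¹ * z * y) * (y⁻¹ * x * y) = y⁻¹ * (z * x) * y := by group
    have e2 : (y⁻¹ * x * y) * (y⁻¹ * z * y) = y⁻¹ * (x * z) * y := by group
    rw [e1, e2, hzx]
  have h2 : (y⁻¹ * z * y) * x = x * (y⁻¹ * z * y) := freeCT hyxy1' hconj2 h'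
  obtain ⟨r', hr'⟩ := (hiff _).mp h2
  have key : z = z ^ (r * r') := by
    calc z = y * (y⁻¹ * z * y) * y⁻¹ := by group
      _ = y * z ^ r' * y⁻¹ := by rw [hr']
      _ = (y * z * y⁻¹) ^ r' := conj_zpow.symm
      _ = (z ^ r) ^ r' := by rw [hr]
      _ = z ^ (r * r') := (zpow_mul z r r').symm
  have hrr' : r * r' = 1 := by
    have h3 : z ^ (1 - r * r') = 1 := by
      rw [zpow_sub, zpow_one, ← key, mul_inv_cancel]
    have := htor _ h3
    omega
  rcases Int.eq_one_or_neg_one_of_mul_eq_one hrr' with hr1 | hrm1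
  · -- r = 1 : y commutes with z, hence with x
    rw [hr1, zpow_one] at hr
    have hzy : y * z = z * y := by
      have := congrArg (· * y) hr
      simpa [mul_assoc] using this
    have hcy : Commute y z := hzy
    rw [hxk]
    exact ((hcy.zpow_right k).eq).symm
  · -- r = -1 : y inverts z
    rw [hrm1] at hr
    have hrz : y * z * y⁻¹ = z⁻¹ := by rw [hr, zpow_neg_one]
    have hy2 : (y * y) * z * (y * y)⁻¹ = z := by
      have e1 : (y * y) * z * (y * y)⁻¹ = y * (y * z * y⁻¹) * y⁻¹ := by group
      rw [e1, hrz]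
      have e2 : y * z⁻¹ * y⁻¹ = (y * z * y⁻¹)⁻¹ := by group
      rw [e2, hrz, inv_inv]
    have hy2z : (y * y) * z = z * (y * y) := by
      have := congrArg (· * (y * y)) hy2
      simpa [mul_assoc] using this
    have hy2x : (y * y) * x = x * (y * y) := by
      have hcy2 : Commute (y * y) z := hy2z
      rw [hxk]
      exact (hcy2.zpow_right k).eq
    obtain ⟨j, hj⟩ := (hiff _).mp hy2x
    by_cases hj0 : j = 0
    · have hyy : y * y = 1 := by rw [hj, hj0, zpow_zero]
      have hy1 : y = 1 := free_tf (x := y) (m := 2) (by norm_num) (by rw [zpow_two]; exact hyy)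
      rw [hy1, mul_one, one_mul]
    · exfalso
      have hzj : z ^ j ≠ 1 := fun h0 => hj0 (htor j h0)
      have hyzj : y * z ^ j = z ^ j * y := by
        rw [← hj]
        have e : y * (y * y) = (y * y) * y := by group
        exact e
      have hzjz : z ^ j * z = z * z ^ j := ((Commute.refl z).zpow_left j).eq
      have hyz : y * z = z * y := freeCT hzj hyzj hzjz
      have hinv : z⁻¹ = z := by
        rw [← hrz, hyz, mul_inv_cancel_right]
      have hz2 : z ^ (2 : ℤ) = 1 := by
        rw [zpow_two]
        nth_rewrite 2 [← hinv]
        exact mul_inv_cancel z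
      have := htor 2 hz2
      norm_num at this

lemma combine {G : Type*} [Group G] :
    ∀ (n : ℕ) (v : Fin n → G), (∀ i, ∃ χ : G →* Multiplicative ℤ, χ (v i) ≠ 1) →
      ∃ χ : G →* Multiplicative ℤ, ∀ i, χ (v i) ≠ 1 := by
  intro n
  induction n with
  | zero => exact fun v _ => ⟨1, fun i => i.elim0⟩
  | succ n ih =>
    intro v hv
    obtain ⟨χ', hχ'⟩ := ih (fun i => v i.succ) (fun i => hv i.succ)
    obtain ⟨χ₀, hχ₀⟩ := hv 0
    set A : Fin (n + 1) → ℤ := fun i => Multiplicative.toAdd (χ' (v i)) with hA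
    set B : Fin (n + 1) → ℤ := fun i => Multiplicative.toAdd (χ₀ (v i)) with hB
    set M : ℤ := 1 + ((Finset.univ.sup fun i => (A i).natAbs : ℕ) : ℤ) with hM
    have hMabs : ∀ i, ((A i).natAbs : ℤ) < M := by
      intro i
      have h1 := Finset.le_sup (f := fun i => (A i).natAbs) (Finset.mem_univ i)
      have h2 : ((A i).natAbs : ℤ) ≤ ((Finset.univ.sup fun i => (A i).natAbs : ℕ) : ℤ) := by
        exact_mod_cast h1
      omega
    refine ⟨χ' * χ₀ ^ M, ?_⟩
    intro i hcon
    have hval : A i + M * B i = 0 := by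
      have h1 : (χ' * χ₀ ^ M) (v i) = χ' (v i) * (χ₀ (v i)) ^ M := rfl
      rw [hcon] at h1
      have h2 := congrArg Multiplicative.toAdd h1.symm
      simpa [smul_eq_mul, A, B] using h2
    by_cases hBi : B i = 0
    · rw [hBi, mul_zero, add_zero] at hval
      rcases Fin.eq_zero_or_eq_succ i with rfl | ⟨j, rfl⟩
      · apply hχ₀
        have h8 : Multiplicative.toAdd (χ₀ (v 0)) = 0 := hBi
        rwa [toAdd_eq_zero] at h8
      · apply hχ' j
        have h8 : Multiplicative.toAdd (χ' (v j.succ)) = 0 := hval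
        rwa [toAdd_eq_zero] at h8
    · have hM0 : (0 : ℤ) ≤ M := by omega
      have h3 : |A i| < M := by
        have := hMabs i
        rw [Int.abs_eq_natAbs]
        exact this
      have hmb : M * B i = -A i := by omega
      have h4 : |M * B i| = |A i| := by rw [hmb, abs_neg]
      have hb1 : 1 ≤ |B i| := Int.one_le_abs hBi
      have h5 : M ≤ |M * B i| := by
        rw [abs_mul, abs_of_nonneg hM0]
        exact le_mul_of_one_le_right hM0 hb1
      linarith

lemma abelian_case {G : Type*} [Group G]
    (hRF : ∀ g : G, g ≠ 1 → ∃ (α : Type) (f : G →* FreeGroup α), f g ≠ 1)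
    (hab : ∀ x y : G, x * y = y * x) (n : ℕ) (g : Fin n → G) (hg : ∀ i, g i ≠ 1) :
    ∃ (α : Type) (f : G →* FreeGroup α), ∀ i, f (g i) ≠ 1 := by
  have hchar : ∀ i, ∃ χ : G →* Multiplicative ℤ, χ (g i) ≠ 1 := by
    intro i
    obtain ⟨α, f, hf⟩ := hRF (g i) (hg i)
    obtain ⟨z, hz1, hiff, ⟨k, hk0, hxk⟩, htor⟩ := free_root hf
    have hrange : ∀ u : G, ∃ j : ℤ, f u = z ^ j := by
      intro u
      apply (hiff (f u)).mp
      rw [← _root_.map_mul, ← _root_.map_mul, hab]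
    choose j hj using hrange
    have hz_inj : ∀ a b : ℤ, z ^ a = z ^ b → a = b := by
      intro a b hzz
      have h1 : z ^ (a - b) = 1 := by rw [zpow_sub, hzz, mul_inv_cancel]
      have := htor _ h1
      omega
    refine ⟨{ toFun := fun u => Multiplicative.ofAdd (j u),
              map_one' := ?_, map_mul' := ?_ }, ?_⟩
    · have h1 : z ^ (j 1) = 1 := by rw [← hj]; exact _root_.map_one f
      have h2 := htor _ h1
      simp [h2]
    · intro u v
      have h1 : z ^ (j (u * v)) = z ^ (j u + j v) := by
        rw [← hj, _root_.map_mul, hj, hj, zpow_add]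
      have h2 := hz_inj _ _ h1
      simp [h2, ofAdd_add]
    · intro h1
      apply hf
      have hj0 : j (g i) = 0 := by simpa using h1
      rw [hj (g i), hj0, zpow_zero]
  obtain ⟨χ, hχ⟩ := combine n g hchar
  refine ⟨PUnit, (zpowersHom (FreeGroup PUnit) (FreeGroup.of PUnit.unit)).comp χ, ?_⟩
  intro i h0
  apply hχ i
  rw [MonoidHom.comp_apply, zpowersHom_apply] at h0
  have h2 := congrArg (E PUnit.unit) h0
  rw [E_zpow, E_of_self, E_one, mul_one] at h2
  exact toAdd_eq_zero.mp h2

lemma list_case {G : Type*} [Group G]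
    (hRF : ∀ g : G, g ≠ 1 → ∃ (α : Type) (f : G →* FreeGroup α), f g ≠ 1)
    (hCT : ∀ a b c : G, b ≠ 1 → a * b = b * a → b * c = c * b → a * c = c * a)
    (hCSA : ∀ x y : G, x ≠ 1 → x * (y * x * y⁻¹) = (y * x * y⁻¹) * x → x * y = y * x)
    (hnab : ∃ p q : G, p * q ≠ q * p) :
    ∀ (n : ℕ) (l : List G), l.length ≤ n → (∀ x ∈ l, x ≠ 1) →
      ∃ (α : Type) (f : G →* FreeGroup α), ∀ x ∈ l, f x ≠ 1 := by
  intro n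
  induction n with
  | zero =>
    intro l hl _
    have : l = [] := List.eq_nil_of_length_eq_zero (Nat.le_zero.mp hl)
    subst this
    exact ⟨PUnit, 1, by simp⟩
  | succ n ih =>
    intro l hl hsl
    match l with
    | [] => exact ⟨PUnit, 1, by simp⟩
    | [x] =>
      obtain ⟨α, f, hf⟩ := hRF x (hsl x (by simp))
      exact ⟨α, f, by simpa using hf⟩
    | x :: y :: rest =>
      have hx : x ≠ 1 := hsl x (by simp)
      have hy : y ≠ 1 := hsl y (by simp)
      have key : ∃ u : G, u ≠ 1 ∧ ∀ (β : Type) (f : G →* FreeGroup β),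
          f u ≠ 1 → f x ≠ 1 ∧ f y ≠ 1 := by
        by_cases hcomm : x * y = y * x
        · obtain ⟨p, q, hpq⟩ := hnab
          have ht : ∃ t : G, x * t ≠ t * x := by
            by_contra hcon
            push_neg at hcon
            exact hpq (hCT p x q hx (hcon p).symm (hcon q))
          obtain ⟨t, hxt⟩ := ht
          refine ⟨x * (t * y * t⁻¹) * x⁻¹ * (t * y * t⁻¹)⁻¹, ?_, ?_⟩
          · intro h1
            have hcom : x * (t * y * t⁻¹) = (t * y * t⁻¹) * x := by
              have e : x * (t * y * t⁻¹) =
                  (x * (t * y * t⁻¹) * x⁻¹ * (t * y * t⁻¹)⁻¹) * ((t * y * t⁻¹) * x) := by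
                group
              rw [e, h1, one_mul]
            have h2 : y * (t * y * t⁻¹) = (t * y * t⁻¹) * y :=
              hCT y x (t * y * t⁻¹) hx hcomm.symm hcom
            have h3 : y * t = t * y := hCSA y t hy h2
            exact hxt (hCT x y t hy hcomm h3)
          · intro β f hfu
            constructor
            · intro hfx
              apply hfu
              simp only [_root_.map_mul, _root_.map_inv, hfx]
              group
            · intro hfy
              apply hfu
              simp only [_root_.map_mul, _root_.map_inv, hfy]
              group
        · refine ⟨x * y * x⁻¹ * y⁻¹, ?_, ?_⟩
          · intro h1
            apply hcomm
            have e : x * y = (x * y * x⁻¹ * y⁻¹) * (y * x) := by group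
            rw [e, h1, one_mul]
          · intro β f hfu
            constructor
            · intro hfx
              apply hfu
              simp only [_root_.map_mul, _root_.map_inv, hfx]
              group
            · intro hfy
              apply hfu
              simp only [_root_.map_mul, _root_.map_inv, hfy]
              group
      obtain ⟨u, hu1, hu2⟩ := key
      have hlen : (u :: rest).length ≤ n := by
        simp only [List.length_cons] at hl ⊢
        omega
      obtain ⟨α, f, hf⟩ := ih (u :: rest) hlen (by
        intro v hv
        rcases List.mem_cons.mp hv with rfl | hv'
        · exact hu1
        · exact hsl v (by simp [hv']))
      refine ⟨α, f, ?_⟩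
      intro v hv
      have hfu : f u ≠ 1 := hf u (by simp)
      rcases List.mem_cons.mp hv with rfl | hv'
      · exact (hu2 α f hfu).1
      rcases List.mem_cons.mp hv' with rfl | hv''
      · exact (hu2 α f hfu).2
      · exact hf v (by simp [hv''])

end BaumslagAux

/-- A group `G` is residually free if any non-trivial element can be mapped to a
non-trivial element of some free group. -/
def ResiduallyFree (G : Type*) [Group G] : Prop :=
  ∀ g : G, g ≠ 1 → ∃ (α : Type) (f : G →* FreeGroup α), f g ≠ 1
/-- Commutation is transitive on non-trivial elements. -/
def CommTransitive (G : Type*) [Group G] : Prop :=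
  ∀ a b c : G, b ≠ 1 → a * b = b * a → b * c = c * b → a * c = c * a

theorem frf_iff_rf_and_commTransitive (G : Type*) [Group G] :
    (FullyResiduallyFree G → ResiduallyFree G) ∧
      (ResiduallyFree G → (FullyResiduallyFree G ↔ CommTransitive G)) := by
  constructor
  · intro hF g hg
    obtain ⟨α, f, hf⟩ := hF 1 (fun _ => g) (fun _ => hg)
    exact ⟨α, f, hf 0⟩
  · intro hRF
    constructor
    · intro hF a b c hb hab hbc
      by_contra hac
      have hcomm : a * c * a⁻¹ * c⁻¹ ≠ 1 := by
        intro h1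
        apply hac
        have e : a * c = (a * c * a⁻¹ * c⁻¹) * (c * a) := by group
        rw [e, h1, one_mul]
      obtain ⟨α, f, hf⟩ := hF 2 ![b, a * c * a⁻¹ * c⁻¹] (by
        intro i
        fin_cases i
        · simpa using hb
        · simpa using hcomm)
      have h1 : f b ≠ 1 := by simpa using hf 0
      have h2 : f (a * c * a⁻¹ * c⁻¹) ≠ 1 := by simpa using hf 1
      apply h2
      have hfab : f a * f b = f b * f a := by
        rw [← _root_.map_mul, ← _root_.map_mul, hab]
      have hfbc : f b * f c = f c * f b := by
        rw [← _root_.map_mul, ← _root_.map_mul, hbc]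
      have hfac : f a * f c = f c * f a := BaumslagAux.freeCT h1 hfab hfbc
      rw [_root_.map_mul, _root_.map_mul, _root_.map_mul, _root_.map_inv, _root_.map_inv, hfac]
      group
    · intro hCT
      by_cases hab : ∀ x y : G, x * y = y * x
      · intro n g hg
        exact BaumslagAux.abelian_case hRF hab n g hg
      · push_neg at hab
        have hCSA : ∀ x y : G, x ≠ 1 →
            x * (y * x * y⁻¹) = (y * x * y⁻¹) * x → x * y = y * x := by
          intro x y hx hcon
          by_contra hxy
          have hu : x * y * x⁻¹ * y⁻¹ ≠ 1 := by
            intro h1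
            apply hxy
            have e : x * y = (x * y * x⁻¹ * y⁻¹) * (y * x) := by group
            rw [e, h1, one_mul]
          obtain ⟨α, f, hf⟩ := hRF _ hu
          have hfx : f x ≠ 1 := by
            intro h0
            apply hf
            simp only [_root_.map_mul, _root_.map_inv, h0]
            group
          apply hf
          have hfcon : f x * (f y * f x * (f y)⁻¹) = (f y * f x * (f y)⁻¹) * f x := by
            have h3 := congrArg f hcon
            simpa only [_root_.map_mul, _root_.map_inv] using h3
          have h4 := BaumslagAux.freeCSA hfx hfcon
          rw [_root_.map_mul, _root_.map_mul, _root_.map_mul, _root_.map_inv,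
            _root_.map_inv, h4]
          group
        intro n g hg
        obtain ⟨α, f, hf⟩ := BaumslagAux.list_case hRF hCT hCSA hab
          (List.ofFn g).length (List.ofFn g) le_rfl (by
            intro v hv
            obtain ⟨i, rfl⟩ := List.mem_ofFn.mp hv
            exact hg i)
        exact ⟨α, f, fun i => hf (g i) (List.mem_ofFn.mpr ⟨i, rfl⟩)⟩
end
end
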